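/- For every constant κ ∈ (0, 1/2) there exist c > 0 and n₀ such that the following holds for every multiple of 4, n ≥ n₀, every M ⊆ [n] with |M| = n/2, and every P ⊆ Ψ_M with |P| = |Ψ_M|/2: every completion F of the D⁻ instance determined by (M, P) satisfies dist(F, (n/2)-Junta) ≥ c/√n. -/

import Mathlib

open Finset

attribute [local instance] Classical.propDecidable

variable {n : ℕ}

/-- The edge of the hypercube along dimension `i` at `x` (the pair
`{x^{(i→0)}, x^{(i→1)}}`) is decreasing for `f`. -/
def decEdge (f : (Fin n → Bool) → Bool) (x : Fin n → Bool) (i : Fin n) : Prop :=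
  f (Function.update x i false) = true ∧ f (Function.update x i true) = false

/-- `x` with its `i`-th coordinate flipped. -/
def flipC (x : Fin n → Bool) (i : Fin n) : Fin n → Bool := Function.update x i (!(x i))

/-- `g` is monotone. -/
def monoB (g : (Fin n → Bool) → Bool) : Prop :=
  ∀ x y : Fin n → Bool, (∀ i, x i ≤ y i) → g x ≤ g y

/-- Distance of `f` to the set of monotone functions. -/
noncomputable def distMono (f : (Fin n → Bool) → Bool) : ℝ :=
  sInf {d : ℝ | ∃ g : (Fin n → Bool) → Bool, monoB g ∧
    d = ((univ.filter fun x => f x ≠ g x).card : ℝ) / 2 ^ n}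

/-- `I_f⁻(x)`: the number of decreasing edges of `f` incident on `x`. -/
noncomputable def Iminus (f : (Fin n → Bool) → Bool) (x : Fin n → Bool) : ℕ :=
  (univ.filter fun i => decEdge f x i).card

/-- The number of decreasing edges of `f` (each edge represented by its lower
endpoint together with its dimension). -/
noncomputable def numDecEdges (f : (Fin n → Bool) → Bool) : ℕ :=
  (univ.filter fun q : (Fin n → Bool) × Fin n => q.1 q.2 = false ∧ decEdge f q.1 q.2).card

/-- The event Capture(x, S, f). -/
def Capture (f : (Fin n → Bool) → Bool) (S : Finset (Fin n)) (x : Fin n → Bool) : Prop :=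
  ∃ i ∈ S, decEdge f x i ∧ ∀ j ∈ S \ {i}, ¬ decEdge f (flipC x i) j

/-- Hamming weight of `x` restricted to the coordinates in `M`. -/
noncomputable def wt (M : Finset (Fin n)) (x : Fin n → Bool) : ℕ :=
  (M.filter fun i => x i = true).card

/-- `g` is unate. -/
def unate (g : (Fin n → Bool) → Bool) : Prop :=
  ∃ σ : Fin n → Bool, monoB (fun x => g (fun i => xor (x i) (σ i)))

/-- Distance of `f` to the set of unate functions. -/
noncomputable def distUnate (f : (Fin n → Bool) → Bool) : ℝ :=
  sInf {d : ℝ | ∃ g : (Fin n → Bool) → Bool, unate g ∧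
    d = ((univ.filter fun x => f x ≠ g x).card : ℝ) / 2 ^ n}

/-- `g` is a `k`-junta. -/
def isJunta (k : ℕ) (g : (Fin n → Bool) → Bool) : Prop :=
  ∃ J : Finset (Fin n), J.card ≤ k ∧
    ∀ x y : Fin n → Bool, (∀ i ∈ J, x i = y i) → g x = g y

/-- Distance of `f` to the set of `k`-juntas. -/
noncomputable def distJunta (k : ℕ) (f : (Fin n → Bool) → Bool) : ℝ :=
  sInf {d : ℝ | ∃ g : (Fin n → Bool) → Bool, isJunta k g ∧
    d = ((univ.filter fun x => f x ≠ g x).card : ℝ) / 2 ^ n}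

/-- `I⁻_{f,red}(x)` for the coloring `col` (an edge is identified by its lower
endpoint along its dimension; `col e i = true` means the edge along dimension `i`
at `e` is red). -/
noncomputable def IredCol (f : (Fin n → Bool) → Bool)
    (col : (Fin n → Bool) → Fin n → Bool) (x : Fin n → Bool) : ℕ :=
  if f x = true then
    (univ.filter fun i => decEdge f x i ∧ col (Function.update x i false) i = true).card
  else 0

/-- `I⁻_{f,blue}(x)` for the coloring `col`. -/
noncomputable def IblueCol (f : (Fin n → Bool) → Bool)
    (col : (Fin n → Bool) → Fin n → Bool) (x : Fin n → Bool) : ℕ :=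
  if f x = false then
    (univ.filter fun i => decEdge f x i ∧ col (Function.update x i false) i = false).card
  else 0

/-- `Ψ_M`: the middle layer of the subcube `{0,1}^M`. -/
noncomputable def PsiSet (M : Finset (Fin n)) : Finset (↥M → Bool) :=
  univ.filter fun z => (univ.filter fun i : ↥M => z i = true).card = n / 4

/-- `x` is an erased point (for parameter `κ` and control set `M`). -/
def ErasedPt (κ : ℝ) (M : Finset (Fin n)) (x : Fin n → Bool) : Prop :=
  wt M x = n / 4 ∧ |(wt Mᶜ x : ℝ) - (n : ℝ) / 4| ≤ (n : ℝ) ^ κ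

/-- `Maj(x_{M̄})`: majority on the coordinates outside `M`. -/
noncomputable def MajBar (M : Finset (Fin n)) (x : Fin n → Bool) : Bool :=
  decide (n / 4 < wt Mᶜ x)

/-- `F` is a completion of the `D⁻` instance determined by `(M, P)`. -/
def DminusCompletion (κ : ℝ) (M : Finset (Fin n)) (P : Finset (↥M → Bool))
    (F : (Fin n → Bool) → Bool) : Prop :=
  (∀ x, wt M x < n / 4 → F x = false) ∧
  (∀ x, n / 4 < wt M x → F x = true) ∧
  (∀ x, wt M x = n / 4 → ¬ ErasedPt κ M x →
    F x = if (fun i : ↥M => x i.1) ∈ P then MajBar M x else !(MajBar M x))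

/-- The function `F` of Statement 12: `F(x) = 1` iff `|x_M| > n/4`, or
`|x_M| = n/4` and `x_M ∉ P`. -/
noncomputable def DplusF (M : Finset (Fin n)) (P : Finset (↥M → Bool))
    (x : Fin n → Bool) : Bool :=
  if n / 4 < wt M x then true
  else if wt M x = n / 4 ∧ (fun i : ↥M => x i.1) ∉ P then true
  else false

lemma card_weight {α : Type*} [Fintype α] (s : Finset (α → Bool)) (k : ℕ)
    (hs : ∀ f, f ∈ s ↔ (univ.filter fun i => f i = true).card = k) :
    s.card = (Fintype.card α).choose k := by
  classical
  rw [← Finset.card_univ, ← Finset.card_powersetCard k (univ : Finset α)]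
  apply Finset.card_nbij' (i := fun f => univ.filter fun i => f i = true)
    (j := fun s => fun i => decide (i ∈ s))
  · intro f hf
    rw [Finset.mem_coe, hs] at hf
    simp only [Finset.mem_coe, Finset.mem_powersetCard]
    exact ⟨Finset.subset_univ _, hf⟩
  · intro t hts
    simp only [Finset.mem_coe, Finset.mem_powersetCard] at hts
    rw [Finset.mem_coe, hs]
    rw [show (univ.filter fun i => decide (i ∈ t) = true) = t by ext i; simp]
    exact hts.2
  · intro f hf; funext i; simp
  · intro t ht; ext i; simp

noncomputable def glueF (M : Finset (Fin n)) (z : ↥M → Bool) (w : ↥(Mᶜ) → Bool) : Fin n → Bool :=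
  fun i => if h : i ∈ M then z ⟨i, h⟩ else w ⟨i, by simpa using h⟩

lemma res_glue (M : Finset (Fin n)) (z : ↥M → Bool) (w : ↥(Mᶜ) → Bool) :
    (fun i : ↥M => glueF M z w i.1) = z := by
  funext i; simp [glueF, i.2]

lemma resC_glue (M : Finset (Fin n)) (z : ↥M → Bool) (w : ↥(Mᶜ) → Bool) :
    (fun i : ↥(Mᶜ) => glueF M z w i.1) = w := by
  funext i
  have hi : i.1 ∉ M := Finset.mem_compl.mp i.2
  simp [glueF, hi]

lemma glue_inj (M : Finset (Fin n)) : Function.Injective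
    (fun p : (↥M → Bool) × (↥(Mᶜ) → Bool) => glueF M p.1 p.2) := by
  intro p q h
  have h1 := congrArg (fun x => (fun i : ↥M => x i.1)) h
  have h2 := congrArg (fun x => (fun i : ↥(Mᶜ) => x i.1)) h
  simp only [res_glue, resC_glue] at h1 h2
  exact Prod.ext h1 h2

lemma wt_eq_subtype (M : Finset (Fin n)) (x : Fin n → Bool) :
    wt M x = (univ.filter fun j : ↥M => x j.1 = true).card := by
  classical
  rw [wt]
  refine (Finset.card_nbij (i := fun j : ↥M => j.1) ?_ ?_ ?_).symm
  · intro j hj; simp only [Finset.mem_coe, mem_filter, mem_univ, true_and] at hj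
    exact mem_filter.mpr ⟨j.2, hj⟩
  · exact Subtype.val_injective.injOn
  · intro a ha
    simp only [Finset.coe_filter, Set.mem_setOf_eq, mem_filter] at ha
    exact ⟨⟨a, ha.1⟩, by simp [ha.2], rfl⟩

lemma wt_glue (M : Finset (Fin n)) (z : ↥M → Bool) (w : ↥(Mᶜ) → Bool) :
    wt M (glueF M z w) = (univ.filter fun j : ↥M => z j = true).card := by
  rw [wt_eq_subtype]
  congr 1
  ext j
  simp [glueF, j.2]

lemma wtC_glue (M : Finset (Fin n)) (z : ↥M → Bool) (w : ↥(Mᶜ) → Bool) :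
    wt Mᶜ (glueF M z w) = (univ.filter fun j : ↥(Mᶜ) => w j = true).card := by
  rw [wt_eq_subtype]
  congr 1
  ext j
  have hj : j.1 ∉ M := Finset.mem_compl.mp j.2
  simp [glueF, hj]

lemma wt_update_true (M : Finset (Fin n)) (x : Fin n → Bool) (i : Fin n)
    (hi : i ∈ M) (hx : x i = false) :
    wt M (Function.update x i true) = wt M x + 1 := by
  classical
  rw [wt, wt]
  rw [show M.filter (fun j => Function.update x i true j = true)
      = insert i (M.filter fun j => x j = true) by
    ext j
    simp only [mem_filter, mem_insert, Function.update_apply]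
    by_cases hj : j = i <;> simp [hj, hi, hx]]
  rw [Finset.card_insert_of_notMem (by simp [hx])]

noncomputable def Wlow (κ : ℝ) (M : Finset (Fin n)) : Finset (↥(Mᶜ) → Bool) :=
  univ.filter fun w => (((univ.filter fun j => w j = true).card : ℝ)) < (n:ℝ)/4 - (n:ℝ)^κ

noncomputable def Whigh (κ : ℝ) (M : Finset (Fin n)) : Finset (↥(Mᶜ) → Bool) :=
  univ.filter fun w => (n:ℝ)/4 + (n:ℝ)^κ < (((univ.filter fun j => w j = true).card : ℝ))

noncomputable def Wband (κ : ℝ) (M : Finset (Fin n)) : Finset (↥(Mᶜ) → Bool) :=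
  univ.filter fun w => |(((univ.filter fun j => w j = true).card : ℝ)) - (n:ℝ)/4| ≤ (n:ℝ)^κ

lemma rpow_nn (κ : ℝ) : (0:ℝ) ≤ (n:ℝ)^κ := Real.rpow_nonneg (Nat.cast_nonneg n) κ

lemma W_partition (κ : ℝ) (M : Finset (Fin n)) :
    (Wlow κ M).card + (Whigh κ M).card + (Wband κ M).card = 2 ^ (Mᶜ.card) := by
  classical
  have ht := rpow_nn (n := n) κ
  have hu : Wlow κ M ∪ Whigh κ M ∪ Wband κ M = univ := by
    ext w
    simp only [Wlow, Whigh, Wband, mem_union, mem_filter, mem_univ, true_and, iff_true]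
    set a := (((univ.filter fun j => w j = true).card : ℝ)) with ha
    rcases lt_or_ge a ((n:ℝ)/4 - (n:ℝ)^κ) with h|h
    · exact Or.inl (Or.inl h)
    · rcases lt_or_ge ((n:ℝ)/4 + (n:ℝ)^κ) a with h2|h2
      · exact Or.inl (Or.inr h2)
      · refine Or.inr ?_
        rw [abs_le]; constructor <;> linarith
  have d1 : Disjoint (Wlow κ M) (Whigh κ M) := by
    rw [Finset.disjoint_left]; intro w h1 h2
    simp only [Wlow, Whigh, mem_filter, mem_univ, true_and] at h1 h2
    linarith
  have d2 : Disjoint (Wlow κ M ∪ Whigh κ M) (Wband κ M) := by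
    rw [Finset.disjoint_left]; intro w h1 h2
    simp only [Wlow, Whigh, Wband, mem_union, mem_filter, mem_univ, true_and, abs_le] at h1 h2
    rcases h1 with h1|h1 <;> linarith [h2.1, h2.2]
  have hcard : (univ : Finset (↥(Mᶜ) → Bool)).card = 2 ^ (Mᶜ.card) := by
    rw [card_univ, Fintype.card_fun, Fintype.card_bool, Fintype.card_coe]
  rw [← hcard, ← hu, Finset.card_union_of_disjoint d2, Finset.card_union_of_disjoint d1]


lemma sqrt_ineq_lb (m : ℕ) : 2 * Real.sqrt m * (m+1) ≤ (2*m+1) * Real.sqrt (m+1) := by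
  have h1 : (0:ℝ) ≤ 2 * Real.sqrt m * (m+1) := by positivity
  have h2 : (0:ℝ) ≤ (2*m+1) * Real.sqrt (m+1) := by positivity
  have := Real.sq_sqrt (by positivity : (0:ℝ) ≤ (m:ℝ))
  have := Real.sq_sqrt (by positivity : (0:ℝ) ≤ (m:ℝ)+1)
  nlinarith [Real.sqrt_nonneg (m:ℝ), Real.sqrt_nonneg ((m:ℝ)+1), sq_nonneg (Real.sqrt m * (m+1) - Real.sqrt (m+1) * m), sq_nonneg ((m:ℝ)+1), sq_nonneg (Real.sqrt m - Real.sqrt (m+1))]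

lemma binom_lb : ∀ m : ℕ, 1 ≤ m → (4:ℝ)^m ≤ 2 * Real.sqrt m * (Nat.centralBinom m) := by
  intro m hm
  induction m with
  | zero => omega
  | succ k ih =>
    rcases Nat.eq_or_lt_of_le hm with h1 | h1
    · simp [← h1, Nat.centralBinom]
      norm_num
    · have hk : 1 ≤ k := by omega
      have ihk := ih hk
      have hrec : ((k:ℝ)+1) * (Nat.centralBinom (k+1)) = 2*(2*k+1) * (Nat.centralBinom k) := by
        have := Nat.succ_mul_centralBinom_succ k
        exact_mod_cast congrArg (Nat.cast : ℕ → ℝ) this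
      have hC : (0:ℝ) < Nat.centralBinom k := by exact_mod_cast Nat.centralBinom_pos k
      have hkpos : (0:ℝ) < (k:ℝ)+1 := by positivity
      -- goal: 4^(k+1) ≤ 2√(k+1) * C(k+1)
      have key : 2 * Real.sqrt k * ((k:ℝ)+1) ≤ (2*k+1) * Real.sqrt (k+1) := sqrt_ineq_lb k
      have hCk1 : (Nat.centralBinom (k+1) : ℝ) = 2*(2*k+1) * (Nat.centralBinom k) / ((k:ℝ)+1) := by
        field_simp at hrec ⊢; linarith
      rw [pow_succ]
      push_cast
      rw [hCk1, ← mul_div_assoc, le_div_iff₀ hkpos]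
      calc (4:ℝ)^k * 4 * ((k:ℝ)+1) ≤ (2 * Real.sqrt k * (Nat.centralBinom k)) * 4 * ((k:ℝ)+1) := by nlinarith
        _ = (2 * Real.sqrt k * ((k:ℝ)+1)) * (4 * (Nat.centralBinom k)) := by ring
        _ ≤ ((2*k+1) * Real.sqrt (k+1)) * (4 * (Nat.centralBinom k)) := by nlinarith
        _ = 2 * Real.sqrt ((k:ℝ)+1) * (2*(2*↑k+1) * ↑(Nat.centralBinom k)) := by ring

lemma sqrt_ineq_ub (m : ℕ) : (2*(m:ℝ)+1) * Real.sqrt (3*m+4) ≤ 2*((m:ℝ)+1) * Real.sqrt (3*m+1) := by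
  have e1 := Real.sq_sqrt (by positivity : (0:ℝ) ≤ 3*(m:ℝ)+4)
  have e2 := Real.sq_sqrt (by positivity : (0:ℝ) ≤ 3*(m:ℝ)+1)
  have h1 : (0:ℝ) ≤ (2*(m:ℝ)+1) * Real.sqrt (3*m+4) := by positivity
  have h2 : (0:ℝ) ≤ 2*((m:ℝ)+1) * Real.sqrt (3*m+1) := by positivity
  have hsq : ((2*(m:ℝ)+1) * Real.sqrt (3*m+4))^2 ≤ (2*((m:ℝ)+1) * Real.sqrt (3*m+1))^2 := by
    rw [mul_pow, mul_pow, e1, e2]; nlinarith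
  calc (2*(m:ℝ)+1) * Real.sqrt (3*m+4) = Real.sqrt (((2*(m:ℝ)+1) * Real.sqrt (3*m+4))^2) := (Real.sqrt_sq h1).symm
    _ ≤ Real.sqrt ((2*((m:ℝ)+1) * Real.sqrt (3*m+1))^2) := Real.sqrt_le_sqrt hsq
    _ = 2*((m:ℝ)+1) * Real.sqrt (3*m+1) := Real.sqrt_sq h2

lemma binom_ub : ∀ m : ℕ, (Nat.centralBinom m : ℝ) * Real.sqrt (3*m+1) ≤ 4^m := by
  intro m
  induction m with
  | zero => norm_num [Nat.centralBinom]
  | succ k ih =>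
    have hrec : ((k:ℝ)+1) * (Nat.centralBinom (k+1)) = 2*(2*k+1) * (Nat.centralBinom k) := by
      exact_mod_cast congrArg (Nat.cast : ℕ → ℝ) (Nat.succ_mul_centralBinom_succ k)
    have hC : (0:ℝ) < Nat.centralBinom k := by exact_mod_cast Nat.centralBinom_pos k
    have hkpos : (0:ℝ) < (k:ℝ)+1 := by positivity
    have hCk1 : (Nat.centralBinom (k+1) : ℝ) = 2*(2*k+1) * (Nat.centralBinom k) / ((k:ℝ)+1) := by
      field_simp at hrec ⊢; linarith
    have key := sqrt_ineq_ub k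
    have hs4 : (0:ℝ) ≤ Real.sqrt (3*(k:ℝ)+4) := Real.sqrt_nonneg _
    have hs1 : (0:ℝ) ≤ Real.sqrt (3*(k:ℝ)+1) := Real.sqrt_nonneg _
    rw [pow_succ]
    push_cast
    rw [hCk1, div_mul_eq_mul_div, div_le_iff₀ hkpos]
    have h34 : (3*((k:ℝ)+1)+1) = 3*(k:ℝ)+4 := by ring
    rw [h34]
    calc 2*(2*(k:ℝ)+1) * ↑(Nat.centralBinom k) * Real.sqrt (3*↑k+4)
        = ((2*(k:ℝ)+1) * Real.sqrt (3*↑k+4)) * (2 * ↑(Nat.centralBinom k)) := by ring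
      _ ≤ (2*((k:ℝ)+1) * Real.sqrt (3*↑k+1)) * (2 * ↑(Nat.centralBinom k)) := by nlinarith
      _ = ((Nat.centralBinom k : ℝ) * Real.sqrt (3*↑k+1)) * (4*((k:ℝ)+1)) := by ring
      _ ≤ (4:ℝ)^k * (4*((k:ℝ)+1)) := by nlinarith
      _ = (4:ℝ)^k * 4 * ((k:ℝ)+1) := by ring
lemma wt_flip {α : Type*} [Fintype α] (w : α → Bool) :
    (univ.filter fun j => (!(w j)) = true).card
      = Fintype.card α - (univ.filter fun j => w j = true).card := by
  classical
  have : (univ.filter fun j => (!(w j)) = true) = univ \ (univ.filter fun j => w j = true) := by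
    ext j; simp
  rw [this, Finset.card_sdiff_of_subset (Finset.filter_subset _ _), card_univ]

lemma wt_le_card {α : Type*} [Fintype α] (w : α → Bool) :
    (univ.filter fun j => w j = true).card ≤ Fintype.card α := by
  classical
  exact le_trans (Finset.card_filter_le _ _) (le_of_eq card_univ)

lemma low_high_card (κ : ℝ) (M : Finset (Fin n)) (hM : M.card = n/2) (hn4 : 4 ∣ n) :
    (Wlow κ M).card = (Whigh κ M).card := by
  classical
  obtain ⟨m, rfl⟩ := hn4
  have hmc : Fintype.card ↥(Mᶜ) = 2*m := by
    rw [Fintype.card_coe, Finset.card_compl, hM, Fintype.card_fin]; omega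
  have key : ∀ w : ↥(Mᶜ) → Bool, w ∈ Wlow κ M → (fun j => !(w j)) ∈ Whigh κ M := by
    intro w hw
    simp only [Wlow, Whigh, mem_filter, mem_univ, true_and] at hw ⊢
    rw [wt_flip, hmc]
    have hle := wt_le_card w
    rw [hmc] at hle
    have hcast : ((2*m - (univ.filter fun j => w j = true).card : ℕ) : ℝ)
        = 2*(m:ℝ) - ((univ.filter fun j => w j = true).card : ℝ) := by
      push_cast [Nat.cast_sub hle]; ring
    rw [hcast]
    have h4 : ((4*m : ℕ) : ℝ) = 4*(m:ℝ) := by push_cast; ring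
    rw [h4] at hw ⊢
    linarith
  have key2 : ∀ w : ↥(Mᶜ) → Bool, w ∈ Whigh κ M → (fun j => !(w j)) ∈ Wlow κ M := by
    intro w hw
    simp only [Wlow, Whigh, mem_filter, mem_univ, true_and] at hw ⊢
    rw [wt_flip, hmc]
    have hle := wt_le_card w
    rw [hmc] at hle
    have hcast : ((2*m - (univ.filter fun j => w j = true).card : ℕ) : ℝ)
        = 2*(m:ℝ) - ((univ.filter fun j => w j = true).card : ℝ) := by
      push_cast [Nat.cast_sub hle]; ring
    rw [hcast]
    have h4 : ((4*m : ℕ) : ℝ) = 4*(m:ℝ) := by push_cast; ring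
    rw [h4] at hw ⊢
    linarith
  apply Finset.card_nbij (i := fun w => fun j => !(w j)) (fun w hw => key w hw)
  · intro w _ v _ h
    funext j
    have := congrFun h j
    simpa using this
  · intro w hw
    refine ⟨fun j => !(w j), key2 w (by simpa using hw), ?_⟩
    funext j; simp

lemma psi_split (M : Finset (Fin n)) (hM : M.card = n/2) (hn4 : 4 ∣ n) (i0 : ↥M) :
    2 * ((PsiSet M).filter fun z => z i0 = false).card = (PsiSet M).card := by
  classical
  obtain ⟨m, rfl⟩ := hn4
  have hmc : Fintype.card ↥M = 2*m := by rw [Fintype.card_coe, hM]; omega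
  have h44 : (4*m)/4 = m := by omega
  have key : ∀ z : ↥M → Bool, z ∈ (PsiSet M).filter (fun z => z i0 = true) →
      (fun j => !(z j)) ∈ (PsiSet M).filter (fun z => z i0 = false) := by
    intro z hz
    simp only [PsiSet, mem_filter, mem_univ, true_and, h44] at hz ⊢
    rw [wt_flip, hmc, hz.1]
    refine ⟨by omega, by simp [hz.2]⟩
  have key2 : ∀ z : ↥M → Bool, z ∈ (PsiSet M).filter (fun z => z i0 = false) →
      (fun j => !(z j)) ∈ (PsiSet M).filter (fun z => z i0 = true) := by
    intro z hz
    simp only [PsiSet, mem_filter, mem_univ, true_and, h44] at hz ⊢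
    rw [wt_flip, hmc, hz.1]
    refine ⟨by omega, by simp [hz.2]⟩
  have hb : ((PsiSet M).filter fun z => z i0 = true).card
      = ((PsiSet M).filter fun z => z i0 = false).card := by
    apply Finset.card_nbij (i := fun z => fun j => !(z j)) (fun z hz => key z hz)
    · intro w _ v _ h
      funext j
      have := congrFun h j
      simpa using this
    · intro z hz
      refine ⟨fun j => !(z j), key2 z (by simpa using hz), by funext j; simp⟩
  have := Finset.card_filter_add_card_filter_not
    (s := PsiSet M) (p := fun z => z i0 = false)
  have hne : ((PsiSet M).filter fun z => ¬ (z i0 = false)).card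
      = ((PsiSet M).filter fun z => z i0 = true).card := by
    congr 1
    apply Finset.filter_congr
    intro z _; simp
  rw [two_mul, ← this, hne, hb]

lemma psi_card (M : Finset (Fin n)) (hM : M.card = n/2) :
    (PsiSet M).card = Nat.choose (n/2) (n/4) := by
  rw [card_weight (PsiSet M) (n/4) (fun f => by simp only [PsiSet, Finset.mem_filter, Finset.mem_univ, true_and]), Fintype.card_coe, hM]

lemma band_le (κ : ℝ) (M : Finset (Fin n)) (hM : M.card = n/2) (hn4 : 4 ∣ n) :
    (Wband κ M).card ≤ (2 * ⌈(n:ℝ)^κ⌉₊ + 1) * Nat.choose (n/2) (n/4) := by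
  classical
  set t := ⌈(n:ℝ)^κ⌉₊ with ht
  have hmc : Fintype.card ↥(Mᶜ) = n/2 := by
    rw [Fintype.card_coe, Finset.card_compl, hM, Fintype.card_fin]; omega
  have hc4 : ((n/4 : ℕ) : ℝ) = (n:ℝ)/4 := by
    obtain ⟨m, rfl⟩ := hn4
    rw [Nat.mul_div_cancel_left m (by norm_num)]; push_cast; ring
  have hsub : Wband κ M ⊆ (Finset.Icc (n/4 - t) (n/4 + t)).biUnion
      (fun k => univ.filter fun w : ↥(Mᶜ) → Bool => (univ.filter fun j => w j = true).card = k) := by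
    intro w hw
    simp only [Wband, mem_filter, mem_univ, true_and] at hw
    set k := (univ.filter fun j => w j = true).card with hk
    have htk : (n:ℝ)^κ ≤ t := Nat.le_ceil _
    have h1 := (abs_le.mp hw).1
    have h2 := (abs_le.mp hw).2
    simp only [Finset.mem_biUnion, Finset.mem_Icc, mem_filter, mem_univ, true_and]
    refine ⟨k, ⟨?_, ?_⟩, rfl⟩
    · have : ((n/4 : ℕ) : ℝ) ≤ (k:ℝ) + (t:ℝ) := by rw [hc4]; linarith
      have : (n/4 : ℕ) ≤ k + t := by exact_mod_cast this
      omega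
    · have : (k:ℝ) ≤ ((n/4 : ℕ) : ℝ) + (t:ℝ) := by rw [hc4]; linarith
      exact_mod_cast this
  calc (Wband κ M).card ≤ _ := Finset.card_le_card hsub
    _ ≤ ∑ k ∈ Finset.Icc (n/4 - t) (n/4 + t),
        (univ.filter fun w : ↥(Mᶜ) → Bool => (univ.filter fun j => w j = true).card = k).card :=
      Finset.card_biUnion_le
    _ ≤ ∑ _k ∈ Finset.Icc (n/4 - t) (n/4 + t), Nat.choose (n/2) (n/4) := by
      apply Finset.sum_le_sum
      intro k _
      refine le_trans (le_of_eq ((card_weight _ k (fun f => by simp only [Finset.mem_filter, Finset.mem_univ, true_and])).trans (by rw [hmc]))) ?_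
      have := Nat.choose_le_middle k (n/2)
      rwa [show (n/2)/2 = n/4 by omega] at this
    _ = (Finset.Icc (n/4 - t) (n/4 + t)).card * Nat.choose (n/2) (n/4) := by
      rw [Finset.sum_const, smul_eq_mul]
    _ ≤ (2*t + 1) * Nat.choose (n/2) (n/4) := by
      apply Nat.mul_le_mul_right
      rw [Nat.card_Icc]
      omega

lemma cast_div4 (hn4 : 4 ∣ n) : ((n/4 : ℕ) : ℝ) = (n:ℝ)/4 := by
  obtain ⟨m, rfl⟩ := hn4
  rw [Nat.mul_div_cancel_left m (by norm_num)]; push_cast; ring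

lemma psi_wt (M : Finset (Fin n)) (z : ↥M → Bool) (hz : z ∈ PsiSet M) (w : ↥(Mᶜ) → Bool) :
    wt M (glueF M z w) = n / 4 := by
  rw [wt_glue]
  simpa only [PsiSet, Finset.mem_filter, Finset.mem_univ, true_and] using hz

lemma F_val_low (κ : ℝ) (M : Finset (Fin n)) (P : Finset (↥M → Bool))
    (F : (Fin n → Bool) → Bool) (hF : DminusCompletion κ M P F) (hn4 : 4 ∣ n)
    (z : ↥M → Bool) (hz : z ∈ PsiSet M) (w : ↥(Mᶜ) → Bool) (hw : w ∈ Wlow κ M) :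
    F (glueF M z w) = (if z ∈ P then false else true) := by
  have hwt := psi_wt M z hz w
  have hwtc := wtC_glue M z w
  simp only [Wlow, mem_filter, mem_univ, true_and] at hw
  have ht := rpow_nn (n := n) κ
  have hklt : ((wt Mᶜ (glueF M z w) : ℕ) : ℝ) < (n:ℝ)/4 - (n:ℝ)^κ := by rw [hwtc]; exact hw
  have hne : ¬ ErasedPt κ M (glueF M z w) := by
    intro he
    have h2 := (abs_le.mp he.2).1
    linarith
  have := hF.2.2 _ hwt hne
  rw [res_glue] at this
  rw [this]
  have hmaj : MajBar M (glueF M z w) = false := by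
    rw [MajBar]
    have : wt Mᶜ (glueF M z w) < n/4 := by
      have : ((wt Mᶜ (glueF M z w) : ℕ) : ℝ) < ((n/4 : ℕ) : ℝ) := by
        rw [cast_div4 hn4]; linarith
      exact_mod_cast this
    simp; omega
  rw [hmaj]
  by_cases hzP : z ∈ P <;> simp [hzP]

lemma F_val_high (κ : ℝ) (M : Finset (Fin n)) (P : Finset (↥M → Bool))
    (F : (Fin n → Bool) → Bool) (hF : DminusCompletion κ M P F) (hn4 : 4 ∣ n)
    (z : ↥M → Bool) (hz : z ∈ PsiSet M) (w : ↥(Mᶜ) → Bool) (hw : w ∈ Whigh κ M) :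
    F (glueF M z w) = (if z ∈ P then true else false) := by
  have hwt := psi_wt M z hz w
  have hwtc := wtC_glue M z w
  simp only [Whigh, mem_filter, mem_univ, true_and] at hw
  have ht := rpow_nn (n := n) κ
  have hkgt : (n:ℝ)/4 + (n:ℝ)^κ < ((wt Mᶜ (glueF M z w) : ℕ) : ℝ) := by rw [hwtc]; exact hw
  have hne : ¬ ErasedPt κ M (glueF M z w) := by
    intro he
    have h2 := (abs_le.mp he.2).2
    linarith
  have := hF.2.2 _ hwt hne
  rw [res_glue] at this
  rw [this]
  have hmaj : MajBar M (glueF M z w) = true := by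
    rw [MajBar]
    have : n/4 < wt Mᶜ (glueF M z w) := by
      have : ((n/4 : ℕ) : ℝ) < ((wt Mᶜ (glueF M z w) : ℕ) : ℝ) := by
        rw [cast_div4 hn4]; linarith
      exact_mod_cast this
    simp; omega
  rw [hmaj]
  by_cases hzP : z ∈ P <;> simp [hzP]

lemma main_count (κ : ℝ) (hn4 : 4 ∣ n) (M : Finset (Fin n)) (hM : M.card = n/2)
    (P : Finset (↥M → Bool)) (F : (Fin n → Bool) → Bool) (hF : DminusCompletion κ M P F)
    (g : (Fin n → Bool) → Bool) (J : Finset (Fin n)) (hJc : J.card ≤ n/2)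
    (hgJ : ∀ x y, (∀ i ∈ J, x i = y i) → g x = g y) :
    (PsiSet M).card * (Wlow κ M).card ≤ 2 * (univ.filter fun x => F x ≠ g x).card := by
  classical
  set D := univ.filter fun x => F x ≠ g x with hD
  by_cases hMJ : M ⊆ J
  case pos =>
    -- J = M
    have hJM : J = M := (Finset.eq_of_subset_of_card_le hMJ (by omega)).symm
    set T := ((PsiSet M) ×ˢ (univ : Finset (↥(Mᶜ) → Bool))).filter
      (fun p => F (glueF M p.1 p.2) ≠ g (glueF M p.1 p.2)) with hT
    have hTD : T.card ≤ D.card := by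
      apply Finset.card_le_card_of_injOn (fun p => glueF M p.1 p.2)
      · intro p hp
        simp only [hT, Finset.mem_coe, mem_filter] at hp
        simp only [hD, Finset.mem_coe, mem_filter, mem_univ, true_and]
        exact hp.2
      · intro p _ q _ h
        exact glue_inj M h
    have hfib : ∀ z ∈ PsiSet M, (Wlow κ M).card ≤ (T.filter fun p => p.1 = z).card := by
      intro z hz
      have hgc : ∀ w : ↥(Mᶜ) → Bool, g (glueF M z w) = g (glueF M z (fun _ => false)) := by
        intro w
        apply hgJ
        intro i hi
        have hiM : i ∈ M := hJM ▸ hi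
        simp [glueF, hiM]
      set b := g (glueF M z (fun _ => false)) with hb
      have hinj : ∀ W : Finset (↥(Mᶜ) → Bool),
          (∀ w ∈ W, F (glueF M z w) ≠ b) → W.card ≤ (T.filter fun p => p.1 = z).card := by
        intro W hW
        apply Finset.card_le_card_of_injOn (fun w => (z, w))
        · intro w hw
          have hmemT : ((z, w) : (↥M → Bool) × (↥(Mᶜ) → Bool)) ∈ T := by
            rw [hT]
            refine mem_filter.mpr ⟨Finset.mem_product.mpr ⟨hz, mem_univ _⟩, ?_⟩
            show F (glueF M z w) ≠ g (glueF M z w)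
            rw [hgc w]; exact hW w hw
          exact mem_filter.mpr ⟨hmemT, rfl⟩
        · intro w _ v _ h
          exact congrArg Prod.snd h
      by_cases hzP : z ∈ P
      · cases hbv : b with
        | true =>
          apply hinj (Wlow κ M)
          intro w hw
          rw [F_val_low κ M P F hF hn4 z hz w hw]
          simp [hzP, hbv]
        | false =>
          rw [low_high_card κ M hM hn4]
          apply hinj (Whigh κ M)
          intro w hw
          rw [F_val_high κ M P F hF hn4 z hz w hw]
          simp [hzP, hbv]
      · cases hbv : b with
        | true =>
          rw [low_high_card κ M hM hn4]
          apply hinj (Whigh κ M)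
          intro w hw
          rw [F_val_high κ M P F hF hn4 z hz w hw]
          simp [hzP, hbv]
        | false =>
          apply hinj (Wlow κ M)
          intro w hw
          rw [F_val_low κ M P F hF hn4 z hz w hw]
          simp [hzP, hbv]
    have hsum : T.card = ∑ z ∈ PsiSet M, (T.filter fun p => p.1 = z).card := by
      apply Finset.card_eq_sum_card_fiberwise
      intro p hp
      simp only [hT, Finset.mem_coe, mem_filter, Finset.mem_product] at hp
      exact hp.1.1
    have : (PsiSet M).card * (Wlow κ M).card ≤ T.card := by
      rw [hsum]
      calc (PsiSet M).card * (Wlow κ M).card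
          = ∑ _z ∈ PsiSet M, (Wlow κ M).card := by rw [Finset.sum_const, smul_eq_mul]
        _ ≤ _ := Finset.sum_le_sum hfib
    exact (this.trans hTD).trans (by omega : D.card ≤ 2*D.card)
  case neg =>
    obtain ⟨i, hiM, hiJ⟩ := Finset.not_subset.mp hMJ
    set i0 : ↥M := ⟨i, hiM⟩ with hi0
    set Psi0 := (PsiSet M).filter (fun z => z i0 = false) with hPsi0
    set T := ((Psi0 ∩ P) ×ˢ Wlow κ M) ∪ ((Psi0 \ P) ×ˢ Whigh κ M) with hT
    have hTcard : T.card = Psi0.card * (Wlow κ M).card := by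
      rw [hT, Finset.card_union_of_disjoint, Finset.card_product, Finset.card_product,
        low_high_card κ M hM hn4]
      · rw [← low_high_card κ M hM hn4, ← Nat.add_mul, Finset.card_inter_add_card_sdiff]
      · apply Finset.disjoint_left.mpr
        intro p hp hq
        simp only [Finset.mem_product, Finset.mem_inter, Finset.mem_sdiff] at hp hq
        exact hq.1.2 hp.1.2
    -- key facts about points of T
    have hkey : ∀ p ∈ T, F (glueF M p.1 p.2) = false ∧ p.1 ∈ PsiSet M ∧ p.1 i0 = false := by
      intro p hp
      simp only [hT, Finset.mem_union, Finset.mem_product, Finset.mem_inter,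
        Finset.mem_sdiff, hPsi0, mem_filter] at hp
      rcases hp with ⟨⟨⟨hz, hz0⟩, hzP⟩, hw⟩ | ⟨⟨⟨hz, hz0⟩, hzP⟩, hw⟩
      · exact ⟨by rw [F_val_low κ M P F hF hn4 _ hz _ hw]; simp [hzP], hz, hz0⟩
      · exact ⟨by rw [F_val_high κ M P F hF hn4 _ hz _ hw]; simp [hzP], hz, hz0⟩
    have hTD : T.card ≤ D.card := by
      apply Finset.card_le_card_of_injOn
        (fun p => if F (glueF M p.1 p.2) ≠ g (glueF M p.1 p.2) then glueF M p.1 p.2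
          else Function.update (glueF M p.1 p.2) i true)
      · intro p hp
        show (if F (glueF M p.1 p.2) ≠ g (glueF M p.1 p.2) then glueF M p.1 p.2
          else Function.update (glueF M p.1 p.2) i true) ∈ D
        obtain ⟨hFp, hz, hz0⟩ := hkey p hp
        set x := glueF M p.1 p.2 with hx
        have hxi : x i = false := by
          rw [hx]; show glueF M p.1 p.2 i = false
          simp only [glueF, hiM, dif_pos]
          exact hz0
        by_cases hd : F x ≠ g x
        · rw [if_pos hd]
          exact mem_filter.mpr ⟨mem_univ _, hd⟩
        · rw [if_neg hd]
          push_neg at hd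
          refine mem_filter.mpr ⟨mem_univ _, ?_⟩
          have hwty : wt M (Function.update x i true) = n/4 + 1 := by
            rw [wt_update_true M x i hiM hxi, hx, psi_wt M p.1 hz p.2]
          have hFy : F (Function.update x i true) = true := hF.2.1 _ (by omega)
          have hgy : g (Function.update x i true) = g x := by
            apply hgJ
            intro j hj
            have hne : j ≠ i := fun h => hiJ (h ▸ hj)
            rw [Function.update_of_ne hne]
          show F (Function.update x i true) ≠ g (Function.update x i true)
          rw [hFy, hgy, ← hd, hFp]
          simp
      · intro p hp q hq h
        obtain ⟨hFp, _, hz0p⟩ := hkey p hp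
        obtain ⟨hFq, _, hz0q⟩ := hkey q hq
        have hxip : glueF M p.1 p.2 i = false := by
          simp only [glueF, hiM, dif_pos]; exact hz0p
        have hxiq : glueF M q.1 q.2 i = false := by
          simp only [glueF, hiM, dif_pos]; exact hz0q
        have hrec : ∀ r : (↥M → Bool) × (↥(Mᶜ) → Bool), glueF M r.1 r.2 i = false →
            Function.update (if F (glueF M r.1 r.2) ≠ g (glueF M r.1 r.2) then glueF M r.1 r.2
              else Function.update (glueF M r.1 r.2) i true) i false = glueF M r.1 r.2 := by
          intro r hri
          by_cases hd : F (glueF M r.1 r.2) ≠ g (glueF M r.1 r.2)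
          · rw [if_pos hd]
            rw [← hri]
            exact Function.update_eq_self i (glueF M r.1 r.2)
          · rw [if_neg hd, Function.update_idem, ← hri]
            exact Function.update_eq_self i (glueF M r.1 r.2)
        have := congrArg (fun v => Function.update v i false) h
        simp only at this
        rw [hrec p hxip, hrec q hxiq] at this
        exact glue_inj M this
    have hps := psi_split M hM hn4 i0
    calc (PsiSet M).card * (Wlow κ M).card = 2 * Psi0.card * (Wlow κ M).card := by
          rw [hps]
      _ = 2 * T.card := by rw [hTcard]; ring
      _ ≤ 2 * D.card := Nat.mul_le_mul_left 2 hTD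

lemma C_bounds (hn : 16 ≤ n) (hn4 : 4 ∣ n) :
    (2:ℝ)^(n/2) ≤ Real.sqrt n * (Nat.choose (n/2) (n/4)) ∧
    (Nat.choose (n/2) (n/4) : ℝ) * Real.sqrt n ≤ 2 * 2^(n/2) := by
  obtain ⟨m, rfl⟩ := hn4
  have hm : 4 ≤ m := by omega
  have h2 : (4*m)/2 = 2*m := by omega
  have h4 : (4*m)/4 = m := by omega
  rw [h2, h4]
  have hC : ((2*m).choose m : ℝ) = (Nat.centralBinom m : ℝ) := by
    rw [Nat.centralBinom_eq_two_mul_choose]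
  have hsq : Real.sqrt ((4*m : ℕ) : ℝ) = 2 * Real.sqrt m := by
    rw [show ((4*m : ℕ) : ℝ) = (2:ℝ)^2 * m by push_cast; ring,
      Real.sqrt_mul (by positivity), Real.sqrt_sq (by norm_num)]
  have hpow : (2:ℝ)^(2*m) = (4:ℝ)^m := by rw [pow_mul]; norm_num
  constructor
  · rw [hpow, hsq, hC]
    have := binom_lb m (by omega)
    calc (4:ℝ)^m ≤ 2 * Real.sqrt m * (Nat.centralBinom m) := this
      _ = 2 * Real.sqrt m * (Nat.centralBinom m) := rfl
  · rw [hpow, hsq, hC]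
    have hub := binom_ub m
    have hmono : Real.sqrt m ≤ Real.sqrt (3*(m:ℝ)+1) := by
      apply Real.sqrt_le_sqrt; push_cast; linarith [Nat.cast_nonneg (α := ℝ) m]
    have hCpos : (0:ℝ) ≤ (Nat.centralBinom m : ℝ) := Nat.cast_nonneg _
    calc (Nat.centralBinom m : ℝ) * (2 * Real.sqrt m)
        = 2 * ((Nat.centralBinom m : ℝ) * Real.sqrt m) := by ring
      _ ≤ 2 * ((Nat.centralBinom m : ℝ) * Real.sqrt (3*(m:ℝ)+1)) := by nlinarith
      _ ≤ 2 * 4^m := by nlinarith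
      _ = 2 * 4^m := rfl

lemma n0_exists (κ : ℝ) (hκ0 : 0 < κ) (hκ : κ < 1/2) :
    ∃ n₀ : ℕ, ∀ n : ℕ, n₀ ≤ n → 16 ≤ n ∧
      (2*((⌈((n:ℕ):ℝ)^κ⌉₊ : ℝ))+1) ≤ Real.sqrt n / 4 := by
  have h : Filter.Tendsto (fun x : ℝ => x ^ ((1:ℝ)/2 - κ)) Filter.atTop Filter.atTop :=
    tendsto_rpow_atTop (by linarith)
  have h2 : Filter.Tendsto (fun n : ℕ => ((n:ℝ)) ^ ((1:ℝ)/2 - κ)) Filter.atTop Filter.atTop :=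
    h.comp tendsto_natCast_atTop_atTop
  have h3 := (h2.eventually_ge_atTop 20).and (Filter.eventually_ge_atTop (16 : ℕ))
  obtain ⟨n₀, hn₀⟩ := Filter.eventually_atTop.mp h3
  refine ⟨n₀, fun n hn => ?_⟩
  obtain ⟨h20, h16⟩ := hn₀ n hn
  refine ⟨h16, ?_⟩
  have hn1 : (1:ℝ) ≤ (n:ℝ) := by exact_mod_cast le_trans (by norm_num) h16
  have hnpos : (0:ℝ) < (n:ℝ) := by linarith
  have hk1 : (1:ℝ) ≤ (n:ℝ)^κ := Real.one_le_rpow hn1 (le_of_lt hκ0)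
  have hceil : ((⌈(n:ℝ)^κ⌉₊ : ℝ)) ≤ (n:ℝ)^κ + 1 := le_of_lt (Nat.ceil_lt_add_one (by positivity))
  have hsqrt : Real.sqrt n = (n:ℝ) ^ ((1:ℝ)/2) := Real.sqrt_eq_rpow _
  have hsplit : (n:ℝ) ^ ((1:ℝ)/2) = (n:ℝ) ^ ((1:ℝ)/2 - κ) * (n:ℝ)^κ := by
    rw [← Real.rpow_add hnpos]; ring_nf
  have hbig : 20 * (n:ℝ)^κ ≤ Real.sqrt n := by
    rw [hsqrt, hsplit]; nlinarith
  linarith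

/-- every completion `F` of a `D⁻` instance is `Ω(1/√n)`-far
from being an `n/2`-junta. -/
theorem stmt15 : ∀ κ : ℝ, 0 < κ → κ < 1 / 2 →
    ∃ c : ℝ, 0 < c ∧ ∃ n₀ : ℕ, ∀ n : ℕ, n₀ ≤ n → 4 ∣ n →
    ∀ M : Finset (Fin n), M.card = n / 2 →
    ∀ P : Finset (↥M → Bool), P ⊆ PsiSet M → 2 * P.card = (PsiSet M).card →
    ∀ F : (Fin n → Bool) → Bool, DminusCompletion κ M P F →
    c / Real.sqrt n ≤ distJunta (n / 2) F := by
  intro κ hκ0 hκ12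
  obtain ⟨n₀, hn₀⟩ := n0_exists κ hκ0 hκ12
  refine ⟨1/8, by norm_num, n₀, ?_⟩
  intro n hn hn4 M hM P hPsub hPcard F hF
  obtain ⟨h16, hceil⟩ := hn₀ n hn
  rw [distJunta]
  apply le_csInf
  · exact ⟨_, (fun _ => false), ⟨∅, by simp, fun _ _ _ => rfl⟩, rfl⟩
  · rintro d ⟨g, ⟨J, hJc, hgJ⟩, rfl⟩
    have hmain := main_count κ hn4 M hM P F hF g J hJc hgJ
    rw [psi_card M hM] at hmain
    have hWpart := W_partition κ M
    have hMc : Mᶜ.card = n/2 := by rw [Finset.card_compl, hM, Fintype.card_fin]; omega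
    rw [hMc] at hWpart
    have hlh := low_high_card κ M hM hn4
    have hband := band_le κ M hM hn4
    obtain ⟨hClb, hCub⟩ := C_bounds h16 hn4
    have hW2 : 2*(Wlow κ M).card + (Wband κ M).card = 2^(n/2) := by omega
    have hW2R : 2*((Wlow κ M).card : ℝ) + ((Wband κ M).card : ℝ) = 2^(n/2) := by
      exact_mod_cast hW2
    have hmainR : ((Nat.choose (n/2) (n/4) : ℕ) : ℝ) * ((Wlow κ M).card : ℝ)
        ≤ 2 * ((univ.filter fun x => F x ≠ g x).card : ℝ) := by exact_mod_cast hmain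
    have hbandR : ((Wband κ M).card : ℝ)
        ≤ (2*(⌈((n:ℕ):ℝ)^κ⌉₊ : ℝ)+1) * (Nat.choose (n/2) (n/4) : ℝ) := by
      exact_mod_cast hband
    set Dc := ((univ.filter fun x => F x ≠ g x).card : ℝ) with hDcdef
    set S := Real.sqrt n with hS
    have hSpos : 0 < S := Real.sqrt_pos.mpr (by
      have : (16:ℝ) ≤ (n:ℝ) := by exact_mod_cast h16
      linarith)
    set C := ((Nat.choose (n/2) (n/4) : ℕ) : ℝ) with hC
    set Wl := ((Wlow κ M).card : ℝ) with hWl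
    have hWlnn : 0 ≤ Wl := Nat.cast_nonneg _
    have hCnn : (0:ℝ) ≤ C := Nat.cast_nonneg _
    have hDcnn : (0:ℝ) ≤ Dc := Nat.cast_nonneg _
    have hbandR2 : ((Wband κ M).card : ℝ) ≤ (S/4) * C :=
      hbandR.trans (mul_le_mul_of_nonneg_right hceil hCnn)
    have hband3 : ((Wband κ M).card : ℝ) ≤ (2:ℝ)^(n/2)/2 := by
      calc ((Wband κ M).card : ℝ) ≤ (S/4) * C := hbandR2
        _ = (C * S)/4 := by ring
        _ ≤ (2 * 2^(n/2))/4 := by linarith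
        _ = (2:ℝ)^(n/2)/2 := by ring
    have hWlb : (2:ℝ)^(n/2)/4 ≤ Wl := by linarith
    have hnn : (2:ℝ)^(n/2)*(2:ℝ)^(n/2) = 2^n := by
      rw [← pow_add]; congr 1; omega
    have hp2 : (0:ℝ) < 2^(n/2) := by positivity
    rw [div_le_div_iff₀ hSpos (by positivity : (0:ℝ) < 2^n)]
    nlinarith [mul_nonneg (sub_nonneg.mpr hClb) hWlnn,
      mul_le_mul_of_nonneg_left hWlb (le_of_lt hp2),
      mul_le_mul_of_nonneg_right hmainR (le_of_lt hSpos),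
      mul_le_mul_of_nonneg_right (mul_le_mul_of_nonneg_right hClb hWlnn) (le_of_lt hSpos)]
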